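/- Let M be a linearly ordered additive abelian group that is a ℚ-vector space, equipped with its order topology, let e ∈ M with e > 0, and let b ∈ M with b > q•e for every rational q. Then there is no continuous function f : [0, e] → M (with the subspace topology on the interval [0, e] = {x ∈ M : 0 ≤ x ≤ e}) such that f(0) = 0, f(e) = b, and f is piecewise ℚ-affine with respect to a finite cover of [0, e] by intervals of M: i.e., such that there exist finitely many intervals I_1, …, I_k of M (intervals with endpoints in M or unbounded) covering [0, e], rationals q_1, …, q_k and elements c_1, …, c_k ∈ M with f(x) = q_i•x + c_i for all x ∈ I_i ∩ [0, e] and each i. -/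

import Mathlib

open Set Filter Topology

/-- An interval of a linear order `M`: a set of one of the forms
`(a,b), [a,b], (a,b], [a,b), (a,∞), [a,∞), (−∞,a), (−∞,a], (−∞,∞)`
with endpoints in `M`. -/
def IsIntervalOf {M : Type*} [LinearOrder M] (I : Set M) : Prop :=
  (∃ a b : M, I = Ioo a b) ∨ (∃ a b : M, I = Icc a b) ∨
  (∃ a b : M, I = Ioc a b) ∨ (∃ a b : M, I = Ico a b) ∨
  (∃ a : M, I = Ioi a) ∨ (∃ a : M, I = Ici a) ∨
  (∃ a : M, I = Iio a) ∨ (∃ a : M, I = Iic a) ∨ I = univ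

section Aux

variable {M : Type*} [AddCommGroup M] [LinearOrder M] [IsOrderedAddMonoid M] [Module ℚ M]

lemma aux_inv_nat_smul_nonneg {n : ℕ} (hn : 0 < n) {x : M} (hx : 0 ≤ x) :
    0 ≤ ((n : ℚ))⁻¹ • x := by
  by_contra h
  push_neg at h
  have h1 : 0 < n • (-(((n : ℚ))⁻¹ • x)) := nsmul_pos (neg_pos.2 h) hn.ne'
  rw [← Nat.cast_smul_eq_nsmul ℚ, smul_neg, ← smul_assoc] at h1
  simp only [smul_eq_mul, mul_inv_cancel₀ (by exact_mod_cast hn.ne' : (n:ℚ) ≠ 0), one_smul] at h1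
  exact absurd (neg_pos.1 h1) (not_lt.2 hx)

lemma aux_qsmul_nonneg {q : ℚ} (hq : 0 ≤ q) {x : M} (hx : 0 ≤ x) : 0 ≤ q • x := by
  have hden : 0 < q.den := q.pos
  have hy : 0 ≤ ((q.den : ℚ))⁻¹ • x := aux_inv_nat_smul_nonneg hden hx
  have heq : q • x = (q.num : ℚ) • (((q.den : ℚ))⁻¹ • x) := by
    conv_lhs => rw [← Rat.num_div_den q]
    rw [div_eq_mul_inv, mul_smul]
  rw [heq, ← Int.toNat_of_nonneg (Rat.num_nonneg.2 hq), Int.cast_natCast,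
    Nat.cast_smul_eq_nsmul]
  exact nsmul_nonneg hy _

lemma aux_dense {x y : M} (h : x < y) : ∃ z, x < z ∧ z < y := by
  set u : M := (2:ℚ)⁻¹ • (y - x) with hu
  have hw : 0 < y - x := sub_pos.2 h
  have hu0 : 0 ≤ u := aux_qsmul_nonneg (by norm_num) hw.le
  have hsum : u + u = y - x := by
    rw [hu, ← two_smul ℚ, ← smul_assoc]
    norm_num
  have hupos : 0 < u := by
    rcases hu0.lt_or_eq with h' | h'
    · exact h'
    · exfalso; rw [← h'] at hsum; simp at hsum; exact absurd hsum.symm hw.ne'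
  refine ⟨x + u, lt_add_of_pos_right _ hupos, ?_⟩
  have h2 : x + (u + u) = y := by rw [hsum]; abel
  calc x + u < x + (u + u) := by simp [hupos]
  _ = y := h2

end Aux

lemma aux_interval_sep {M : Type*} [LinearOrder M] {I : Set M} (h : IsIntervalOf I) :
    ∃ s : Finset M, ∀ x y : M, x ∈ I → y ∉ I →
      ∃ t ∈ s, (x ≤ t ∧ t ≤ y) ∨ (y ≤ t ∧ t ≤ x) := by
  rcases h with ⟨a, b, rfl⟩ | ⟨a, b, rfl⟩ | ⟨a, b, rfl⟩ | ⟨a, b, rfl⟩ |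
    ⟨a, rfl⟩ | ⟨a, rfl⟩ | ⟨a, rfl⟩ | ⟨a, rfl⟩ | rfl
  · refine ⟨{a, b}, fun x y hx hy => ?_⟩
    simp only [mem_Ioo, not_and, not_lt] at hx hy
    rcases lt_or_ge a y with h1 | h1
    · exact ⟨b, by simp, Or.inl ⟨hx.2.le, hy h1⟩⟩
    · exact ⟨a, by simp, Or.inr ⟨h1, hx.1.le⟩⟩
  · refine ⟨{a, b}, fun x y hx hy => ?_⟩
    simp only [mem_Icc, not_and, not_le] at hx hy
    rcases le_or_gt a y with h1 | h1
    · exact ⟨b, by simp, Or.inl ⟨hx.2, (hy h1).le⟩⟩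
    · exact ⟨a, by simp, Or.inr ⟨h1.le, hx.1⟩⟩
  · refine ⟨{a, b}, fun x y hx hy => ?_⟩
    simp only [mem_Ioc, not_and, not_le] at hx hy
    rcases lt_or_ge a y with h1 | h1
    · exact ⟨b, by simp, Or.inl ⟨hx.2, (hy h1).le⟩⟩
    · exact ⟨a, by simp, Or.inr ⟨h1, hx.1.le⟩⟩
  · refine ⟨{a, b}, fun x y hx hy => ?_⟩
    simp only [mem_Ico, not_and, not_lt] at hx hy
    rcases le_or_gt a y with h1 | h1
    · exact ⟨b, by simp, Or.inl ⟨hx.2.le, hy h1⟩⟩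
    · exact ⟨a, by simp, Or.inr ⟨h1.le, hx.1⟩⟩
  · refine ⟨{a}, fun x y hx hy => ?_⟩
    simp only [mem_Ioi, not_lt] at hx hy
    exact ⟨a, by simp, Or.inr ⟨hy, hx.le⟩⟩
  · refine ⟨{a}, fun x y hx hy => ?_⟩
    simp only [mem_Ici, not_le] at hx hy
    exact ⟨a, by simp, Or.inr ⟨hy.le, hx⟩⟩
  · refine ⟨{a}, fun x y hx hy => ?_⟩
    simp only [mem_Iio, not_lt] at hx hy
    exact ⟨a, by simp, Or.inl ⟨hx.le, hy⟩⟩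
  · refine ⟨{a}, fun x y hx hy => ?_⟩
    simp only [mem_Iic, not_le] at hx hy
    exact ⟨a, by simp, Or.inl ⟨hx, hy.le⟩⟩
  · exact ⟨∅, fun x y _ hy => absurd (mem_univ y) hy⟩

theorem stmt_17 {M : Type*} [AddCommGroup M] [LinearOrder M] [IsOrderedAddMonoid M] [Module ℚ M]
    [TopologicalSpace M] [OrderTopology M]
    (e b : M) (he : 0 < e) (hb : ∀ q : ℚ, q • e < b) :
    ¬ ∃ f : Icc (0 : M) e → M, Continuous f ∧
        f ⟨0, left_mem_Icc.2 he.le⟩ = 0 ∧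
        f ⟨e, right_mem_Icc.2 he.le⟩ = b ∧
        ∃ (k : ℕ) (I : Fin k → Set M) (q : Fin k → ℚ) (c : Fin k → M),
          (∀ i, IsIntervalOf (I i)) ∧
          (∀ x : Icc (0 : M) e, ∃ i, (x : M) ∈ I i) ∧
          (∀ i, ∀ x : Icc (0 : M) e, (x : M) ∈ I i → f x = q i • (x : M) + c i) := by
  classical
  rintro ⟨f, hcont, hf0, hfe, k, I, q, c, hInt, hcover, haff⟩
  set H : Set M := {m | ∃ n : ℕ, |m| ≤ n • e} with hHdef
  have H0 : (0:M) ∈ H := ⟨0, by simp⟩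
  have Hadd : ∀ {u v : M}, u ∈ H → v ∈ H → u + v ∈ H := by
    rintro u v ⟨n, hn⟩ ⟨n', hn'⟩
    exact ⟨n + n', (abs_add_le u v).trans (by rw [add_nsmul]; exact add_le_add hn hn')⟩
  have Hneg : ∀ {u : M}, u ∈ H → -u ∈ H := by
    rintro u ⟨n, hn⟩; exact ⟨n, by rwa [abs_neg]⟩
  have Hsmul : ∀ (r : ℚ) (x : M), x ∈ Icc (0:M) e → r • x ∈ H := by
    intro r x hx
    obtain ⟨n, hn⟩ := exists_nat_ge |r|
    refine ⟨n, abs_le.2 ⟨?_, ?_⟩⟩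
    · rw [← Nat.cast_smul_eq_nsmul ℚ, ← sub_nonneg, sub_neg_eq_add]
      have h1 : 0 ≤ (r + (n:ℚ)) • x :=
        aux_qsmul_nonneg (by linarith [neg_abs_le r]) hx.1
      have h2 : 0 ≤ (n:ℚ) • (e - x) :=
        aux_qsmul_nonneg (by positivity) (sub_nonneg.2 hx.2)
      have heq : r • x + (n:ℚ) • e = (r + (n:ℚ)) • x + (n:ℚ) • (e - x) := by module
      rw [heq]; exact add_nonneg h1 h2
    · rw [← Nat.cast_smul_eq_nsmul ℚ, ← sub_nonneg]
      have h1 : 0 ≤ ((n:ℚ) - r) • x :=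
        aux_qsmul_nonneg (by linarith [le_abs_self r]) hx.1
      have h2 : 0 ≤ (n:ℚ) • (e - x) :=
        aux_qsmul_nonneg (by positivity) (sub_nonneg.2 hx.2)
      have heq : (n:ℚ) • e - r • x = ((n:ℚ) - r) • x + (n:ℚ) • (e - x) := by module
      rw [heq]; exact add_nonneg h1 h2
  have Hb : b ∉ H := by
    rintro ⟨n, hn⟩
    have h1 : b ≤ (n:ℚ) • e := by
      rw [Nat.cast_smul_eq_nsmul]; exact (le_abs_self b).trans hn
    exact absurd (hb n) (not_lt.2 h1)
  have Hdiff : ∀ {u v : M}, u ∈ H → |v - u| < e → v ∈ H := by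
    intro u v hu hvu
    have h1 : v - u ∈ H := ⟨1, by simpa using hvu.le⟩
    have h2 := Hadd hu h1
    have h3 : u + (v - u) = v := by abel
    rwa [h3] at h2
  choose s hs using fun i => aux_interval_sep (hInt i)
  set T : Finset M :=
    insert (0:M) (insert e ((Finset.univ : Finset (Fin k)).biUnion
      fun i => (s i).filter fun t => 0 ≤ t ∧ t ≤ e)) with hTdef
  have hT_sub : ∀ t ∈ T, t ∈ Icc (0:M) e := by
    intro t ht
    simp only [hTdef, Finset.mem_insert, Finset.mem_biUnion, Finset.mem_filter] at ht
    rcases ht with rfl | rfl | ⟨i, _, _, h1⟩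
    · exact left_mem_Icc.2 he.le
    · exact right_mem_Icc.2 he.le
    · exact ⟨h1.1, h1.2⟩
  have h0T : (0:M) ∈ T := by simp [hTdef]
  have heT : e ∈ T := by simp [hTdef]
  have good0 : ∀ h : (0:M) ∈ Icc (0:M) e, f ⟨0, h⟩ ∈ H := by
    intro h
    rw [show (⟨0, h⟩ : Icc (0:M) e) = ⟨0, left_mem_Icc.2 he.le⟩ from rfl, hf0]
    exact H0
  have bade : ¬ ∀ h : e ∈ Icc (0:M) e, f ⟨e, h⟩ ∈ H := by
    intro hg
    exact Hb (hfe ▸ hg (right_mem_Icc.2 he.le))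
  set Tbad : Finset M := T.filter (fun t => ¬ ∀ h : t ∈ Icc (0:M) e, f ⟨t, h⟩ ∈ H)
    with hTbaddef
  have hTbad_ne : Tbad.Nonempty := ⟨e, Finset.mem_filter.2 ⟨heT, bade⟩⟩
  set m := Tbad.min' hTbad_ne with hmdef
  have hm_mem : m ∈ Tbad := Tbad.min'_mem hTbad_ne
  have hmT : m ∈ T := (Finset.mem_filter.1 hm_mem).1
  have hm_bad : ¬ ∀ h : m ∈ Icc (0:M) e, f ⟨m, h⟩ ∈ H := (Finset.mem_filter.1 hm_mem).2
  have hm_Icc : m ∈ Icc (0:M) e := hT_sub m hmT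
  have h0m : 0 < m := by
    rcases hm_Icc.1.lt_or_eq with h | h
    · exact h
    · exact absurd (h ▸ good0) hm_bad
  set Tlt : Finset M := T.filter (fun t => t < m) with hTltdef
  have hTlt_ne : Tlt.Nonempty := ⟨0, Finset.mem_filter.2 ⟨h0T, h0m⟩⟩
  set t0 := Tlt.max' hTlt_ne with ht0def
  have ht0_mem : t0 ∈ Tlt := Tlt.max'_mem hTlt_ne
  have ht0T : t0 ∈ T := (Finset.mem_filter.1 ht0_mem).1
  have ht0m : t0 < m := (Finset.mem_filter.1 ht0_mem).2
  have ht0_Icc : t0 ∈ Icc (0:M) e := hT_sub t0 ht0T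
  have ht0_good : ∀ h : t0 ∈ Icc (0:M) e, f ⟨t0, h⟩ ∈ H := by
    by_contra hbad
    exact absurd (Finset.min'_le Tbad t0 (Finset.mem_filter.2 ⟨ht0T, hbad⟩))
      (not_le.2 ht0m)
  have hmax : ∀ t ∈ T, t < m → t ≤ t0 := fun t ht htm =>
    Finset.le_max' Tlt t (Finset.mem_filter.2 ⟨ht, htm⟩)
  have hcell_sub : Ioo t0 m ⊆ Icc (0:M) e := fun z hz =>
    ⟨ht0_Icc.1.trans hz.1.le, hz.2.le.trans hm_Icc.2⟩
  have hconst : ∀ x (hx : x ∈ Ioo t0 m) y (hy : y ∈ Ioo t0 m),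
      f ⟨x, hcell_sub hx⟩ ∈ H → f ⟨y, hcell_sub hy⟩ ∈ H := by
    intro x hx y hy hgx
    obtain ⟨i, hi⟩ := hcover ⟨x, hcell_sub hx⟩
    have hyI : y ∈ I i := by
      by_contra hyI
      obtain ⟨t, htS, hcase⟩ := hs i x y hi hyI
      have htIoo : t ∈ Ioo t0 m := by
        rcases hcase with ⟨h1, h2⟩ | ⟨h1, h2⟩
        · exact ⟨hx.1.trans_le h1, lt_of_le_of_lt h2 hy.2⟩
        · exact ⟨hy.1.trans_le h1, lt_of_le_of_lt h2 hx.2⟩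
      have htT : t ∈ T := by
        simp only [hTdef, Finset.mem_insert, Finset.mem_biUnion, Finset.mem_filter]
        exact Or.inr (Or.inr ⟨i, Finset.mem_univ i,
          htS, (hcell_sub htIoo).1, (hcell_sub htIoo).2⟩)
      exact absurd (hmax t htT htIoo.2) (not_le.2 htIoo.1)
    have ex := haff i ⟨x, hcell_sub hx⟩ hi
    have ey := haff i ⟨y, hcell_sub hy⟩ hyI
    have heq : f ⟨y, hcell_sub hy⟩ = q i • y + (f ⟨x, hcell_sub hx⟩ + -(q i • x)) := by
      rw [ex, ey]; abel
    rw [heq]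
    exact Hadd (Hsmul _ _ (hcell_sub hy)) (Hadd hgx (Hneg (Hsmul _ _ (hcell_sub hx))))
  obtain ⟨x0, hx01, hx02⟩ := aux_dense ht0m
  have hx0 : x0 ∈ Ioo t0 m := ⟨hx01, hx02⟩
  have key : ∀ (p : M) (hp : p ∈ Icc (0:M) e),
      (∀ U ∈ 𝓝 p, ∃ z, z ∈ Ioo t0 m ∧ z ∈ U) →
      (f ⟨p, hp⟩ ∈ H ↔ f ⟨x0, hcell_sub hx0⟩ ∈ H) := by
    intro p hp hnear
    have hV : Ioo (f ⟨p, hp⟩ - e) (f ⟨p, hp⟩ + e) ∈ 𝓝 (f ⟨p, hp⟩) :=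
      isOpen_Ioo.mem_nhds ⟨sub_lt_self _ he, lt_add_of_pos_right _ he⟩
    have hpre : f ⁻¹' (Ioo (f ⟨p, hp⟩ - e) (f ⟨p, hp⟩ + e)) ∈
        𝓝 (⟨p, hp⟩ : Icc (0:M) e) :=
      hcont.continuousAt.preimage_mem_nhds hV
    rw [nhds_subtype_eq_comap] at hpre
    obtain ⟨U, hU, hUsub⟩ := Filter.mem_comap.1 hpre
    obtain ⟨z, hz, hzU⟩ := hnear U hU
    have hfz : f ⟨z, hcell_sub hz⟩ ∈ Ioo (f ⟨p, hp⟩ - e) (f ⟨p, hp⟩ + e) :=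
      hUsub hzU
    have habs : |f ⟨z, hcell_sub hz⟩ - f ⟨p, hp⟩| < e := by
      rw [abs_sub_lt_iff]
      exact ⟨sub_lt_iff_lt_add'.2 hfz.2, sub_lt_iff_lt_add'.2 (sub_lt_iff_lt_add.1 hfz.1)⟩
    constructor
    · intro hpH
      exact hconst z hz x0 hx0 (Hdiff hpH habs)
    · intro hx0H
      have hzH : f ⟨z, hcell_sub hz⟩ ∈ H := hconst x0 hx0 z hz hx0H
      exact Hdiff hzH (by rwa [abs_sub_comm])
  have near_m : ∀ U ∈ 𝓝 m, ∃ z, z ∈ Ioo t0 m ∧ z ∈ U := by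
    intro U hU
    obtain ⟨l', hl', hsub⟩ := exists_Ioc_subset_of_mem_nhds' hU ht0m
    obtain ⟨z, hz1, hz2⟩ := aux_dense hl'.2
    exact ⟨z, ⟨lt_of_le_of_lt hl'.1 hz1, hz2⟩, hsub ⟨hz1, hz2.le⟩⟩
  have near_t0 : ∀ U ∈ 𝓝 t0, ∃ z, z ∈ Ioo t0 m ∧ z ∈ U := by
    intro U hU
    obtain ⟨u', hu', hsub⟩ := exists_Ico_subset_of_mem_nhds' hU ht0m
    obtain ⟨z, hz1, hz2⟩ := aux_dense hu'.1
    exact ⟨z, ⟨hz1, lt_of_lt_of_le hz2 hu'.2⟩, hsub ⟨hz1.le, hz2⟩⟩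
  have h1 := key t0 ht0_Icc near_t0
  have h2 := key m hm_Icc near_m
  have hmH : f ⟨m, hm_Icc⟩ ∈ H := h2.2 (h1.1 (ht0_good ht0_Icc))
  exact hm_bad (fun h => hmH)
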